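/- Let m := min_{[p₀,0]} a and M := max_{[p₀,0]} a. If f : [p₀,0] → ℝ is twice continuously differentiable with λ²·(a³f')' = μ·a·f on [p₀,0], f(p₀) = 0 and f'(p₀) = 1, then f'(p) ≥ (m/M)³ for all p ∈ [p₀,0]; in particular f is strictly increasing on [p₀,0], f(p) > 0 for all p ∈ (p₀,0], and f(0) ≥ |p₀|·(m/M)³. -/

import Mathlib

open Real Set

/-- Derivative within the interval [p₀, 0]. -/
noncomputable def dI (p₀ : ℝ) (f : ℝ → ℝ) : ℝ → ℝ :=
  derivWithin f (Set.Icc p₀ 0)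

/-- Let m = min a, M = max a on [p₀,0]. If f solves λ²·(a³f')' = μ·a·f
(μ > 0) with f(p₀) = 0 and f'(p₀) = 1, then f' ≥ (m/M)³ on [p₀,0]; in
particular f is strictly increasing, f > 0 on (p₀,0], and
f(0) ≥ |p₀|·(m/M)³. -/
theorem fundamental_solution_increasing
    (p₀ lam μ : ℝ) (hp₀ : p₀ < 0) (hlam : 0 < lam) (hμ : 0 < μ)
    (a : ℝ → ℝ) (ha : ContDiffOn ℝ 1 a (Icc p₀ 0))
    (hapos : ∀ p ∈ Icc p₀ 0, 0 < a p)
    (m M : ℝ) (hm : m = sInf (a '' Icc p₀ 0)) (hM : M = sSup (a '' Icc p₀ 0))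
    (f : ℝ → ℝ) (hf : ContDiffOn ℝ 2 f (Icc p₀ 0))
    (hfe : ∀ p ∈ Icc p₀ 0,
      lam ^ 2 * dI p₀ (fun q => a q ^ 3 * dI p₀ f q) p = μ * a p * f p)
    (hf0 : f p₀ = 0) (hf'0 : dI p₀ f p₀ = 1) :
    (∀ p ∈ Icc p₀ 0, (m / M) ^ 3 ≤ dI p₀ f p) ∧
    StrictMonoOn f (Icc p₀ 0) ∧
    (∀ p ∈ Ioc p₀ 0, 0 < f p) ∧
    |p₀| * (m / M) ^ 3 ≤ f 0 := by
  have hmemp0 : p₀ ∈ Icc p₀ 0 := left_mem_Icc.2 hp₀.le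
  have hmem0 : (0:ℝ) ∈ Icc p₀ 0 := right_mem_Icc.2 hp₀.le
  have hUD : UniqueDiffOn ℝ (Icc p₀ 0) := uniqueDiffOn_Icc hp₀
  have hfd : DifferentiableOn ℝ f (Icc p₀ 0) := hf.differentiableOn (by norm_num)
  have hdf : ∀ p ∈ Icc p₀ 0, HasDerivWithinAt f (dI p₀ f p) (Icc p₀ 0) p :=
    fun p hp => (hfd p hp).hasDerivWithinAt
  have hderivAt : ∀ p ∈ Ioo p₀ 0, HasDerivAt f (dI p₀ f p) p := fun p hp =>
    (hdf p (Ioo_subset_Icc_self hp)).hasDerivAt (Icc_mem_nhds hp.1 hp.2)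
  have hc1 : ContDiffOn ℝ 1 (dI p₀ f) (Icc p₀ 0) :=
    hf.derivWithin hUD (by norm_num)
  have hgc1 : ContDiffOn ℝ 1 (fun q => a q ^ 3 * dI p₀ f q) (Icc p₀ 0) :=
    (ha.pow 3).mul hc1
  have hgd : DifferentiableOn ℝ (fun q => a q ^ 3 * dI p₀ f q) (Icc p₀ 0) :=
    hgc1.differentiableOn one_ne_zero
  have hgderivAt : ∀ p ∈ Ioo p₀ 0,
      HasDerivAt (fun q => a q ^ 3 * dI p₀ f q)
        (dI p₀ (fun q => a q ^ 3 * dI p₀ f q) p) p := fun p hp =>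
    ((hgd p (Ioo_subset_Icc_self hp)).hasDerivWithinAt).hasDerivAt
      (Icc_mem_nhds hp.1 hp.2)
  have hgeq : ∀ p ∈ Icc p₀ 0,
      dI p₀ (fun q => a q ^ 3 * dI p₀ f q) p = μ * a p * f p / lam ^ 2 := by
    intro p hp
    have := hfe p hp
    field_simp
    linarith [this]
  -- facts about m and M
  have hacont := ha.continuousOn
  have hK : IsCompact (a '' Icc p₀ 0) := isCompact_Icc.image_of_continuousOn hacont
  have hKne : (a '' Icc p₀ 0).Nonempty := ⟨a 0, mem_image_of_mem _ hmem0⟩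
  have hmle : ∀ p ∈ Icc p₀ 0, m ≤ a p := fun p hp =>
    hm ▸ csInf_le hK.bddBelow (mem_image_of_mem _ hp)
  have hleM : ∀ p ∈ Icc p₀ 0, a p ≤ M := fun p hp =>
    hM ▸ le_csSup hK.bddAbove (mem_image_of_mem _ hp)
  have hmpos : 0 < m := by
    have : m ∈ a '' Icc p₀ 0 := hm ▸ hK.sInf_mem hKne
    obtain ⟨x, hx, hxe⟩ := this
    exact hxe ▸ hapos x hx
  have hMpos : 0 < M := lt_of_lt_of_le hmpos ((hmle 0 hmem0).trans (hleM 0 hmem0))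
  -- key lemma: if f' ≥ 0 on Ioo p₀ q, then m³ ≤ a q ³ * f' q
  have keyA : ∀ q ∈ Icc p₀ 0, (∀ p ∈ Ioo p₀ q, 0 ≤ dI p₀ f p) →
      m ^ 3 ≤ a q ^ 3 * dI p₀ f q := by
    intro q hq hpos
    have hsub : Icc p₀ q ⊆ Icc p₀ 0 := Icc_subset_Icc le_rfl hq.2
    have hsub' : Ioo p₀ q ⊆ Ioo p₀ 0 := Ioo_subset_Ioo le_rfl hq.2
    have hmono : MonotoneOn f (Icc p₀ q) := by
      apply monotoneOn_of_deriv_nonneg (convex_Icc _ _) (hf.continuousOn.mono hsub)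
      · rw [interior_Icc]
        exact fun p hp =>
          (hderivAt p (hsub' hp)).differentiableAt.differentiableWithinAt
      · rw [interior_Icc]
        intro p hp
        rw [(hderivAt p (hsub' hp)).deriv]
        exact hpos p hp
    have hfnn : ∀ p ∈ Icc p₀ q, 0 ≤ f p := fun p hp =>
      hf0 ▸ hmono (left_mem_Icc.2 hq.1) hp hp.1
    have hgmono : MonotoneOn (fun q => a q ^ 3 * dI p₀ f q) (Icc p₀ q) := by
      apply monotoneOn_of_deriv_nonneg (convex_Icc _ _) (hgc1.continuousOn.mono hsub)
      · rw [interior_Icc]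
        exact fun p hp =>
          (hgderivAt p (hsub' hp)).differentiableAt.differentiableWithinAt
      · rw [interior_Icc]
        intro p hp
        rw [(hgderivAt p (hsub' hp)).deriv,
          hgeq p (hsub (Ioo_subset_Icc_self hp))]
        have h1 := hapos p (hsub (Ioo_subset_Icc_self hp))
        have h2 := hfnn p (Ioo_subset_Icc_self hp)
        positivity
    have hgp₀ : a p₀ ^ 3 * dI p₀ f p₀ = a p₀ ^ 3 := by rw [hf'0, mul_one]
    calc m ^ 3 ≤ a p₀ ^ 3 :=
          pow_le_pow_left₀ hmpos.le (hmle p₀ hmemp0) 3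
      _ = a p₀ ^ 3 * dI p₀ f p₀ := hgp₀.symm
      _ ≤ a q ^ 3 * dI p₀ f q :=
          hgmono (left_mem_Icc.2 hq.1) (right_mem_Icc.2 hq.1) hq.1
  -- f' > 0 everywhere
  have hpos : ∀ p ∈ Icc p₀ 0, 0 < dI p₀ f p := by
    by_contra h
    push_neg at h
    obtain ⟨q₁, hq₁S, hq₁⟩ := h
    set Z := Icc p₀ 0 ∩ (dI p₀ f) ⁻¹' (Iic 0) with hZ
    have hZclosed : IsClosed Z :=
      hc1.continuousOn.preimage_isClosed_of_isClosed isClosed_Icc isClosed_Iic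
    have hZcomp : IsCompact Z := isCompact_Icc.of_isClosed_subset hZclosed inter_subset_left
    have hZne : Z.Nonempty := ⟨q₁, hq₁S, hq₁⟩
    have hqZ : sInf Z ∈ Z := hZcomp.sInf_mem hZne
    set q := sInf Z with hq
    have hqS : q ∈ Icc p₀ 0 := hqZ.1
    have hfq : dI p₀ f q ≤ 0 := hqZ.2
    have hIoo : ∀ p ∈ Ioo p₀ q, 0 ≤ dI p₀ f p := by
      intro p hp
      have hpS : p ∈ Icc p₀ 0 := ⟨hp.1.le, hp.2.le.trans hqS.2⟩
      by_contra hneg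
      push_neg at hneg
      have hpZ : p ∈ Z := ⟨hpS, hneg.le⟩
      have : q ≤ p := csInf_le hZcomp.bddBelow hpZ
      exact absurd this (not_le.2 hp.2)
    have hA := keyA q hqS hIoo
    have hnp : a q ^ 3 * dI p₀ f q ≤ 0 :=
      mul_nonpos_of_nonneg_of_nonpos (pow_pos (hapos q hqS) 3).le hfq
    nlinarith [pow_pos hmpos 3]
  -- part 1
  have part1 : ∀ p ∈ Icc p₀ 0, (m / M) ^ 3 ≤ dI p₀ f p := by
    intro p hp
    have hA := keyA p hp fun q hq => (hpos q ⟨hq.1.le, hq.2.le.trans hp.2⟩).le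
    have h1 : a p ^ 3 ≤ M ^ 3 :=
      pow_le_pow_left₀ (hapos p hp).le (hleM p hp) 3
    have h2 : a p ^ 3 * dI p₀ f p ≤ M ^ 3 * dI p₀ f p :=
      mul_le_mul_of_nonneg_right h1 (hpos p hp).le
    rw [div_pow, div_le_iff₀ (by positivity)]
    nlinarith
  -- part 2
  have part2 : StrictMonoOn f (Icc p₀ 0) := by
    apply strictMonoOn_of_deriv_pos (convex_Icc _ _) hf.continuousOn
    rw [interior_Icc]
    intro p hp
    rw [(hderivAt p hp).deriv]
    exact hpos p (Ioo_subset_Icc_self hp)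
  refine ⟨part1, part2, fun p hp => ?_, ?_⟩
  · have := part2 hmemp0 ⟨hp.1.le, hp.2⟩ hp.1
    rwa [hf0] at this
  · have hb := (convex_Icc p₀ 0).mul_sub_le_image_sub_of_le_deriv hf.continuousOn
      (by rw [interior_Icc]
          exact fun p hp =>
            (hderivAt p hp).differentiableAt.differentiableWithinAt)
      (C := (m / M) ^ 3)
      (by rw [interior_Icc]
          intro p hp
          rw [(hderivAt p hp).deriv]
          exact part1 p (Ioo_subset_Icc_self hp))
      p₀ hmemp0 0 hmem0 hp₀.le
    rw [hf0, sub_zero] at hb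
    rw [abs_of_neg hp₀]
    linarith
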